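/- Let (X, Y, δ) be random elements with δ taking values in {0,1} and E[δ | X, Y] = π(X) for a measurable function π of X alone. Let u be a square-integrable function of X with E[u(X)] = 0, let v be a square-integrable function of (X, Y) with E[v(X, Y) | X] = 0 almost surely, and let w be a square-integrable function of X. Then the three random variables u(X), δ v(X, Y) and {δ − π(X)} w(X) are pairwise orthogonal in L²: E[u(X) · δ v(X, Y)] = 0, E[u(X){δ − π(X)} w(X)] = 0 and E[δ v(X, Y){δ − π(X)} w(X)] = 0. Moreover E[{δ − π(X)}² w(X)²] = E[π(X){1 − π(X)} w(X)²]. -/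

import Mathlib

open MeasureTheory ProbabilityTheory

abbrev sigmaXY {Ω α β : Type*} [MeasurableSpace α] [MeasurableSpace β]
    (X : Ω → α) (Y : Ω → β) : MeasurableSpace Ω :=
  MeasurableSpace.comap (fun ω => (X ω, Y ω)) inferInstance

abbrev sigmaX {Ω α : Type*} [MeasurableSpace α] (X : Ω → α) : MeasurableSpace Ω :=
  MeasurableSpace.comap X inferInstance

lemma l2_integrable_mul {Ω : Type*} [MeasurableSpace Ω] {μ : Measure Ω} {f g : Ω → ℝ}
    (hf : MemLp f 2 μ) (hg : MemLp g 2 μ) : Integrable (fun ω => f ω * g ω) μ := by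
  have := hg.smul (r := 1) hf
  exact (by simpa [smul_eq_mul, memLp_one_iff_integrable] using this : Integrable (f * g) μ)

/-- In the MAR model (`δ ∈ {0,1}`, `E[δ | X, Y] = π(X)`), for `u` square
integrable with `E[u(X)] = 0`, `v` square integrable with `E[v(X,Y) | X] = 0` a.s., and `w`
square integrable, the random variables `u(X)`, `δ v(X,Y)` and `(δ - π(X)) w(X)` are
pairwise orthogonal in `L²`, and `E[(δ - π(X))² w(X)²] = E[π(X)(1 - π(X)) w(X)²]`. -/
theorem tangent_space_orthogonality
    {Ω α β : Type*} [MeasurableSpace Ω] [MeasurableSpace α] [MeasurableSpace β]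
    (μ : Measure Ω) [IsProbabilityMeasure μ]
    (X : Ω → α) (Y : Ω → β) (δ : Ω → ℝ) (π : α → ℝ)
    (hX : Measurable X) (hY : Measurable Y) (hδ : Measurable δ) (hπ : Measurable π)
    (hδ01 : ∀ ω, δ ω = 0 ∨ δ ω = 1)
    (hMAR : MeasureTheory.condExp
        (MeasurableSpace.comap (fun ω => (X ω, Y ω)) inferInstance) μ δ
        =ᵐ[μ] fun ω => π (X ω))
    (u : α → ℝ) (hu : Measurable u)
    (huL2 : MemLp (fun ω => u (X ω)) 2 μ)
    (hu0 : ∫ ω, u (X ω) ∂μ = 0)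
    (v : α × β → ℝ) (hv : Measurable v)
    (hvL2 : MemLp (fun ω => v (X ω, Y ω)) 2 μ)
    (hv0 : MeasureTheory.condExp (MeasurableSpace.comap X inferInstance) μ
        (fun ω => v (X ω, Y ω)) =ᵐ[μ] fun _ => (0 : ℝ))
    (w : α → ℝ) (hw : Measurable w)
    (hwL2 : MemLp (fun ω => w (X ω)) 2 μ) :
    (∫ ω, u (X ω) * (δ ω * v (X ω, Y ω)) ∂μ = 0) ∧
      (∫ ω, u (X ω) * ((δ ω - π (X ω)) * w (X ω)) ∂μ = 0) ∧
      (∫ ω, δ ω * v (X ω, Y ω) * ((δ ω - π (X ω)) * w (X ω)) ∂μ = 0) ∧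
      (∫ ω, (δ ω - π (X ω)) ^ 2 * w (X ω) ^ 2 ∂μ
        = ∫ ω, π (X ω) * (1 - π (X ω)) * w (X ω) ^ 2 ∂μ) := by
  have hmXY : sigmaXY X Y ≤ (inferInstance : MeasurableSpace Ω) :=
    (hX.prodMk hY).comap_le
  have hmX : sigmaX X ≤ (inferInstance : MeasurableSpace Ω) := hX.comap_le
  -- measurability of compositions w.r.t. the sub-σ-algebras
  have hXm : Measurable[sigmaX X] X := Measurable.of_comap_le le_rfl
  have hXYm : Measurable[sigmaXY X Y] (fun ω => (X ω, Y ω)) := Measurable.of_comap_le le_rfl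
  have hXm' : Measurable[sigmaXY X Y] X := measurable_fst.comp hXYm
  -- δ is bounded hence integrable
  have hδint : Integrable δ μ := by
    refine (integrable_const (1 : ℝ)).mono' hδ.aestronglyMeasurable ?_
    refine Filter.Eventually.of_forall fun ω => ?_
    rcases hδ01 ω with h | h <;> simp [h]
  -- π(X) ∈ [0,1] a.e.
  have hπ01 : ∀ᵐ ω ∂μ, 0 ≤ π (X ω) ∧ π (X ω) ≤ 1 := by
    have h0 : (0 : Ω → ℝ) ≤ᵐ[μ] μ[δ|sigmaXY X Y] := by
      refine condExp_nonneg (Filter.Eventually.of_forall fun ω => ?_)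
      rcases hδ01 ω with h | h <;> simp [h]
    have h1 : μ[δ|sigmaXY X Y] ≤ᵐ[μ] μ[(fun _ => (1:ℝ))|sigmaXY X Y] := by
      refine condExp_mono hδint (integrable_const 1)
        (Filter.Eventually.of_forall fun ω => ?_)
      rcases hδ01 ω with h | h <;> simp [h]
    have hc : μ[(fun _ => (1:ℝ))|sigmaXY X Y] = fun _ => (1:ℝ) := condExp_const hmXY (1:ℝ)
    filter_upwards [h0, h1, hMAR] with ω h0 h1 hm
    rw [hc] at h1
    constructor
    · simpa [hm] using h0
    · simpa [hm] using h1
  -- Key A : for f strongly m_XY-measurable with f*δ integrable, ∫ f δ = ∫ f π(X)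
  have keyA : ∀ f : Ω → ℝ, StronglyMeasurable[sigmaXY X Y] f →
      Integrable (fun ω => f ω * δ ω) μ →
      ∫ ω, f ω * δ ω ∂μ = ∫ ω, f ω * π (X ω) ∂μ := by
    intro f hfm hfδ
    have hfδ' : Integrable (f * δ) μ := hfδ
    have h1 : μ[f * δ|sigmaXY X Y] =ᵐ[μ] f * μ[δ|sigmaXY X Y] :=
      condExp_mul_of_stronglyMeasurable_left hfm hfδ' hδint
    have h2 : f * μ[δ|sigmaXY X Y] =ᵐ[μ] fun ω => f ω * π (X ω) := by
      filter_upwards [hMAR] with ω hm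
      simp [Pi.mul_apply, hm]
    calc ∫ ω, f ω * δ ω ∂μ = ∫ ω, (μ[f * δ|sigmaXY X Y]) ω ∂μ :=
          (integral_congr_ae (Filter.Eventually.of_forall fun ω => rfl)).trans
            (integral_condExp hmXY).symm
      _ = ∫ ω, f ω * π (X ω) ∂μ := integral_congr_ae (h1.trans h2)
  -- Key B : for g strongly m_X-measurable with g*v integrable, ∫ g v = 0
  have keyB : ∀ g : Ω → ℝ, StronglyMeasurable[sigmaX X] g →
      Integrable (fun ω => g ω * v (X ω, Y ω)) μ →
      ∫ ω, g ω * v (X ω, Y ω) ∂μ = 0 := by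
    intro g hgm hgv
    have hvint : Integrable (fun ω => v (X ω, Y ω)) μ := hvL2.integrable one_le_two
    have hgv' : Integrable (g * fun ω => v (X ω, Y ω)) μ := hgv
    have h1 : μ[g * fun ω => v (X ω, Y ω)|sigmaX X] =ᵐ[μ] g * μ[fun ω => v (X ω, Y ω)|sigmaX X] :=
      condExp_mul_of_stronglyMeasurable_left hgm hgv' hvint
    have h2 : g * μ[fun ω => v (X ω, Y ω)|sigmaX X] =ᵐ[μ] fun _ => (0:ℝ) := by
      filter_upwards [hv0] with ω hm
      simp [Pi.mul_apply, hm]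
    calc ∫ ω, g ω * v (X ω, Y ω) ∂μ
        = ∫ ω, (μ[g * fun ω => v (X ω, Y ω)|sigmaX X]) ω ∂μ :=
          (integral_congr_ae (Filter.Eventually.of_forall fun ω => rfl)).trans
            (integral_condExp hmX).symm
      _ = ∫ ω, (0:ℝ) ∂μ := integral_congr_ae (h1.trans h2)
      _ = 0 := integral_zero _ _
  -- integrable products
  have huv : Integrable (fun ω => u (X ω) * v (X ω, Y ω)) μ := l2_integrable_mul huL2 hvL2
  have huw : Integrable (fun ω => u (X ω) * w (X ω)) μ := l2_integrable_mul huL2 hwL2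
  have hvw : Integrable (fun ω => v (X ω, Y ω) * w (X ω)) μ := l2_integrable_mul hvL2 hwL2
  have hw2 : Integrable (fun ω => w (X ω) ^ 2) μ := hwL2.integrable_sq
  have hδabs : ∀ ω, |δ ω| ≤ 1 := fun ω => by rcases hδ01 ω with h | h <;> simp [h]
  -- (1)
  have part1 : ∫ ω, u (X ω) * (δ ω * v (X ω, Y ω)) ∂μ = 0 := by
    have hf1m : StronglyMeasurable[sigmaXY X Y] (fun ω => u (X ω) * v (X ω, Y ω)) :=
      ((hu.comp hXm').mul (hv.comp hXYm)).stronglyMeasurable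
    have hf1δ : Integrable (fun ω => (u (X ω) * v (X ω, Y ω)) * δ ω) μ := by
      refine huv.abs.mono'
        (((hu.comp hX).mul (hv.comp (hX.prodMk hY))).mul hδ).aestronglyMeasurable ?_
      refine Filter.Eventually.of_forall fun ω => ?_
      rw [Real.norm_eq_abs, abs_mul]
      calc |u (X ω) * v (X ω, Y ω)| * |δ ω| ≤ |u (X ω) * v (X ω, Y ω)| * 1 :=
            mul_le_mul_of_nonneg_left (hδabs ω) (abs_nonneg _)
        _ = _ := mul_one _
    have step1 : ∫ ω, u (X ω) * (δ ω * v (X ω, Y ω)) ∂μ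
        = ∫ ω, (u (X ω) * v (X ω, Y ω)) * δ ω ∂μ :=
      integral_congr_ae (Filter.Eventually.of_forall fun ω => by ring)
    rw [step1, keyA _ hf1m hf1δ]
    have step2 : ∫ ω, (u (X ω) * v (X ω, Y ω)) * π (X ω) ∂μ
        = ∫ ω, (u (X ω) * π (X ω)) * v (X ω, Y ω) ∂μ :=
      integral_congr_ae (Filter.Eventually.of_forall fun ω => by ring)
    rw [step2]
    refine keyB _ ((hu.comp hXm).mul (hπ.comp hXm)).stronglyMeasurable ?_
    refine huv.abs.mono' (((hu.comp hX).mul (hπ.comp hX)).mul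
        (hv.comp (hX.prodMk hY))).aestronglyMeasurable ?_
    filter_upwards [hπ01] with ω hπω
    have h1 : |π (X ω)| ≤ 1 := abs_le.mpr ⟨by linarith [hπω.1], hπω.2⟩
    rw [Real.norm_eq_abs]
    calc |u (X ω) * π (X ω) * v (X ω, Y ω)|
        = (|u (X ω)| * |v (X ω, Y ω)|) * |π (X ω)| := by rw [abs_mul, abs_mul]; ring
      _ ≤ (|u (X ω)| * |v (X ω, Y ω)|) * 1 :=
          mul_le_mul_of_nonneg_left h1 (by positivity)
      _ = |u (X ω) * v (X ω, Y ω)| := by rw [mul_one, abs_mul]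
  -- (2)
  have part2 : ∫ ω, u (X ω) * ((δ ω - π (X ω)) * w (X ω)) ∂μ = 0 := by
    have hfm : StronglyMeasurable[sigmaXY X Y] (fun ω => u (X ω) * w (X ω)) :=
      ((hu.comp hXm').mul (hw.comp hXm')).stronglyMeasurable
    have hfδ : Integrable (fun ω => (u (X ω) * w (X ω)) * δ ω) μ := by
      refine huw.abs.mono'
        (((hu.comp hX).mul (hw.comp hX)).mul hδ).aestronglyMeasurable ?_
      refine Filter.Eventually.of_forall fun ω => ?_
      rw [Real.norm_eq_abs, abs_mul]
      calc |u (X ω) * w (X ω)| * |δ ω| ≤ |u (X ω) * w (X ω)| * 1 :=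
            mul_le_mul_of_nonneg_left (hδabs ω) (abs_nonneg _)
        _ = _ := mul_one _
    have hfπ : Integrable (fun ω => (u (X ω) * w (X ω)) * π (X ω)) μ := by
      refine huw.abs.mono'
        (((hu.comp hX).mul (hw.comp hX)).mul (hπ.comp hX)).aestronglyMeasurable ?_
      filter_upwards [hπ01] with ω hπω
      have h1 : |π (X ω)| ≤ 1 := abs_le.mpr ⟨by linarith [hπω.1], hπω.2⟩
      rw [Real.norm_eq_abs, abs_mul]
      calc |u (X ω) * w (X ω)| * |π (X ω)| ≤ |u (X ω) * w (X ω)| * 1 :=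
            mul_le_mul_of_nonneg_left h1 (abs_nonneg _)
        _ = _ := mul_one _
    have step : ∫ ω, u (X ω) * ((δ ω - π (X ω)) * w (X ω)) ∂μ
        = ∫ ω, ((u (X ω) * w (X ω)) * δ ω - (u (X ω) * w (X ω)) * π (X ω)) ∂μ :=
      integral_congr_ae (Filter.Eventually.of_forall fun ω => by ring)
    rw [step, integral_sub hfδ hfπ, keyA _ hfm hfδ, sub_self]
  -- (3)
  have part3 : ∫ ω, δ ω * v (X ω, Y ω) * ((δ ω - π (X ω)) * w (X ω)) ∂μ = 0 := by
    set f : Ω → ℝ := fun ω => v (X ω, Y ω) * (w (X ω) * (1 - π (X ω))) with hfdef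
    have hfm : StronglyMeasurable[sigmaXY X Y] f :=
      ((hv.comp hXYm).mul ((hw.comp hXm').mul
        (measurable_const.sub (hπ.comp hXm')))).stronglyMeasurable
    have hfmeas : Measurable f :=
      ((hv.comp (hX.prodMk hY)).mul ((hw.comp hX).mul
        (measurable_const.sub (hπ.comp hX))))
    have habs : ∀ᵐ ω ∂μ, |f ω| ≤ |v (X ω, Y ω) * w (X ω)| := by
      filter_upwards [hπ01] with ω hπω
      have h1 : |1 - π (X ω)| ≤ 1 := abs_le.mpr ⟨by linarith [hπω.2], by linarith [hπω.1]⟩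
      calc |f ω| = |v (X ω, Y ω) * w (X ω)| * |1 - π (X ω)| := by
            simp only [hfdef]; rw [abs_mul, abs_mul, abs_mul]; ring
        _ ≤ |v (X ω, Y ω) * w (X ω)| * 1 := mul_le_mul_of_nonneg_left h1 (abs_nonneg _)
        _ = _ := mul_one _
    have hfδ : Integrable (fun ω => f ω * δ ω) μ := by
      refine hvw.abs.mono' (hfmeas.mul hδ).aestronglyMeasurable ?_
      filter_upwards [habs] with ω hω
      rw [Real.norm_eq_abs, abs_mul]
      calc |f ω| * |δ ω| ≤ |f ω| * 1 := mul_le_mul_of_nonneg_left (hδabs ω) (abs_nonneg _)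
        _ = |f ω| := mul_one _
        _ ≤ _ := hω
    have step1 : ∫ ω, δ ω * v (X ω, Y ω) * ((δ ω - π (X ω)) * w (X ω)) ∂μ
        = ∫ ω, f ω * δ ω ∂μ := by
      refine integral_congr_ae (Filter.Eventually.of_forall fun ω => ?_)
      simp only [hfdef]
      rcases hδ01 ω with h | h <;> rw [h] <;> ring
    rw [step1, keyA _ hfm hfδ]
    have step2 : ∫ ω, f ω * π (X ω) ∂μ
        = ∫ ω, (w (X ω) * ((1 - π (X ω)) * π (X ω))) * v (X ω, Y ω) ∂μ :=
      integral_congr_ae (Filter.Eventually.of_forall fun ω => by simp only [hfdef]; ring)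
    rw [step2]
    refine keyB _ ((hw.comp hXm).mul
      ((measurable_const.sub (hπ.comp hXm)).mul (hπ.comp hXm))).stronglyMeasurable ?_
    refine hvw.abs.mono' (((hw.comp hX).mul ((measurable_const.sub (hπ.comp hX)).mul
        (hπ.comp hX))).mul (hv.comp (hX.prodMk hY))).aestronglyMeasurable ?_
    filter_upwards [hπ01] with ω hπω
    have h1 : |1 - π (X ω)| ≤ 1 := abs_le.mpr ⟨by linarith [hπω.2], by linarith [hπω.1]⟩
    have h2 : |π (X ω)| ≤ 1 := abs_le.mpr ⟨by linarith [hπω.1], hπω.2⟩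
    have key : |1 - π (X ω)| * |π (X ω)| ≤ 1 := by
      nlinarith [abs_nonneg (1 - π (X ω)), abs_nonneg (π (X ω))]
    rw [Real.norm_eq_abs]
    calc |w (X ω) * ((1 - π (X ω)) * π (X ω)) * v (X ω, Y ω)|
        = (|w (X ω)| * |v (X ω, Y ω)|) * (|1 - π (X ω)| * |π (X ω)|) := by
          rw [abs_mul, abs_mul, abs_mul]; ring
      _ ≤ (|w (X ω)| * |v (X ω, Y ω)|) * 1 :=
          mul_le_mul_of_nonneg_left key (by positivity)
      _ = |v (X ω, Y ω) * w (X ω)| := by rw [mul_one, abs_mul]; ring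
  -- (4)
  have part4 : ∫ ω, (δ ω - π (X ω)) ^ 2 * w (X ω) ^ 2 ∂μ
      = ∫ ω, π (X ω) * (1 - π (X ω)) * w (X ω) ^ 2 ∂μ := by
    set f : Ω → ℝ := fun ω => (1 - 2 * π (X ω)) * w (X ω) ^ 2 with hfdef
    have hfm : StronglyMeasurable[sigmaXY X Y] f :=
      ((measurable_const.sub (measurable_const.mul (hπ.comp hXm'))).mul
        ((hw.comp hXm').pow measurable_const)).stronglyMeasurable
    have hfmeas : Measurable f :=
      (measurable_const.sub (measurable_const.mul (hπ.comp hX))).mul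
        ((hw.comp hX).pow measurable_const)
    have hw2abs : ∀ ω, |w (X ω) ^ 2| = w (X ω) ^ 2 := fun ω => abs_of_nonneg (sq_nonneg _)
    have habs : ∀ᵐ ω ∂μ, |f ω| ≤ w (X ω) ^ 2 := by
      filter_upwards [hπ01] with ω hπω
      have h1 : |1 - 2 * π (X ω)| ≤ 1 := abs_le.mpr ⟨by linarith [hπω.2], by linarith [hπω.1]⟩
      calc |f ω| = |1 - 2 * π (X ω)| * |w (X ω) ^ 2| := by simp only [hfdef]; rw [abs_mul]
        _ ≤ 1 * |w (X ω) ^ 2| := mul_le_mul_of_nonneg_right h1 (abs_nonneg _)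
        _ = w (X ω) ^ 2 := by rw [one_mul, hw2abs]
    have hfδ : Integrable (fun ω => f ω * δ ω) μ := by
      refine hw2.mono' (hfmeas.mul hδ).aestronglyMeasurable ?_
      filter_upwards [habs] with ω hω
      rw [Real.norm_eq_abs, abs_mul]
      calc |f ω| * |δ ω| ≤ |f ω| * 1 := mul_le_mul_of_nonneg_left (hδabs ω) (abs_nonneg _)
        _ = |f ω| := mul_one _
        _ ≤ _ := hω
    have hfint : Integrable f μ := by
      refine hw2.mono' hfmeas.aestronglyMeasurable ?_
      filter_upwards [habs] with ω hω
      rwa [Real.norm_eq_abs]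
    have hπ2w2 : Integrable (fun ω => π (X ω) ^ 2 * w (X ω) ^ 2) μ := by
      refine hw2.mono' (((hπ.comp hX).pow measurable_const).mul
        ((hw.comp hX).pow measurable_const)).aestronglyMeasurable ?_
      filter_upwards [hπ01] with ω hπω
      have h2 : |π (X ω) ^ 2| ≤ 1 := by
        rw [abs_of_nonneg (sq_nonneg _)]; nlinarith [hπω.1, hπω.2]
      rw [Real.norm_eq_abs, abs_mul]
      calc |π (X ω) ^ 2| * |w (X ω) ^ 2| ≤ 1 * |w (X ω) ^ 2| :=
            mul_le_mul_of_nonneg_right h2 (abs_nonneg _)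
        _ = w (X ω) ^ 2 := by rw [one_mul, hw2abs]
    have step : ∫ ω, (δ ω - π (X ω)) ^ 2 * w (X ω) ^ 2 ∂μ
        = ∫ ω, (f ω * δ ω + π (X ω) ^ 2 * w (X ω) ^ 2) ∂μ := by
      refine integral_congr_ae (Filter.Eventually.of_forall fun ω => ?_)
      simp only [hfdef]
      rcases hδ01 ω with h | h <;> rw [h] <;> ring
    rw [step, integral_add hfδ hπ2w2, keyA _ hfm hfδ]
    have hfπ : Integrable (fun ω => f ω * π (X ω)) μ := by
      refine hw2.mono' (hfmeas.mul (hπ.comp hX)).aestronglyMeasurable ?_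
      filter_upwards [hπ01, habs] with ω hπω hω
      have h2 : |π (X ω)| ≤ 1 := abs_le.mpr ⟨by linarith [hπω.1], hπω.2⟩
      rw [Real.norm_eq_abs, abs_mul]
      calc |f ω| * |π (X ω)| ≤ |f ω| * 1 := mul_le_mul_of_nonneg_left h2 (abs_nonneg _)
        _ = |f ω| := mul_one _
        _ ≤ _ := hω
    rw [← integral_add hfπ hπ2w2]
    refine integral_congr_ae (Filter.Eventually.of_forall fun ω => ?_)
    simp only [hfdef]; ring
  exact ⟨part1, part2, part3, part4⟩
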